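/- Fix n, m with dimensions d₁ ≥ … ≥ d_m, d₁ ≤ n, and α ∈ (ℝ_{>0}^n)↓. Suppose Φ^op = (ℱ_j^op)_{j=1}^m ∈ 𝒟(α,d) is such that Λ_{Φ^op}↓ = (γ_ℓ·1_{r_ℓ})_{ℓ=1}^p with γ₁ > … > γ_p > 0, breakpoints 0 = g₀ < g₁ < … < g_p = d₁, r_ℓ = ∑_{j=1}^m (min{g_ℓ, d_j} − g_{ℓ−1})^+, and r_ℓ·γ_ℓ = ∑_{i=g_{ℓ−1}+1}^{g_ℓ} α_i for ℓ < p, r_p·γ_p = ∑_{i=g_{p−1}+1}^{n} α_i. Then for every Φ = (ℱ_j)_{j=1}^m ∈ 𝒟(α,d), one has Λ_{Φ^op} ≺ Λ_Φ. -/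

import Mathlib

noncomputable def decr {n : ℕ} (x : Fin n → ℝ) : Fin n → ℝ :=
  fun i => x (Tuple.sort x i.rev)

noncomputable def psum {n : ℕ} (x : Fin n → ℝ) (k : ℕ) : ℝ :=
  ∑ i ∈ Finset.univ.filter (fun i : Fin n => (i : ℕ) < k), x i

/-- `x` is submajorized by `y` : partial sums of the non-increasing
rearrangement of `x` are dominated by those of `y`. -/
def SubMaj {n d : ℕ} (x : Fin n → ℝ) (y : Fin d → ℝ) : Prop :=
  ∀ k : ℕ, psum (decr x) k ≤ psum (decr y) k

/-- majorization (allowing different lengths). -/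
def Maj {n d : ℕ} (x : Fin n → ℝ) (y : Fin d → ℝ) : Prop :=
  SubMaj x y ∧ (∑ i, x i) = (∑ i, y i)

/-- `γ` is the water-filling of `α` in dimension `d`, with water-level `c`. -/
def IsWaterFilling {n : ℕ} (d : ℕ) (hd0 : 0 < d) (hd : d ≤ n)
    (α : Fin n → ℝ) (c : ℝ) (γ : Fin d → ℝ) : Prop :=
  α ⟨d - 1, by omega⟩ ≤ c ∧
  (∑ i : Fin d, max (α (Fin.castLE hd i)) c) = (∑ i, α i) ∧
  ∀ i : Fin d, γ i = max (α (Fin.castLE hd i)) c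

/-- squared norm of a vector in ℂ^k -/
noncomputable def sqNorm {k : ℕ} (v : Fin k → ℂ) : ℝ := ∑ a, Complex.normSq (v a)

/-- frame operator S = ∑ fᵢ ⊗ fᵢ as a matrix -/
noncomputable def frameOp {k n : ℕ} (f : Fin n → Fin k → ℂ) : Matrix (Fin k) (Fin k) ℂ :=
  ∑ i, Matrix.of fun a b => f i a * (starRingEnd ℂ) (f i b)

theorem frameOp_isHermitian {k n : ℕ} (f : Fin n → Fin k → ℂ) :
    (frameOp f).IsHermitian := by
  unfold frameOp Matrix.IsHermitian
  ext a b
  simp [Matrix.conjTranspose_apply, Matrix.sum_apply, mul_comm]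

/-- the eigenvalues of the frame operator, in non-increasing order -/
noncomputable def spec {k n : ℕ} (f : Fin n → Fin k → ℂ) : Fin k → ℝ :=
  decr ((frameOp_isHermitian f).eigenvalues)


/-- sum of the k largest entries of x (capped at the total). -/
noncomputable def ksum {ι : Type*} [Fintype ι] [DecidableEq ι] (x : ι → ℝ) (k : ℕ) : ℝ :=
  ((Finset.univ.powersetCard (min k (Fintype.card ι))).image fun S => ∑ i ∈ S, x i).max'
    (Finset.image_nonempty.mpr
      (Finset.powersetCard_nonempty.mpr (by rw [Finset.card_univ]; exact min_le_right _ _)))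

/-- majorization between real tuples indexed by (possibly different) finite types. -/
def MajF {ι κ : Type*} [Fintype ι] [DecidableEq ι] [Fintype κ] [DecidableEq κ]
    (x : ι → ℝ) (y : κ → ℝ) : Prop :=
  (∀ k : ℕ, ksum x k ≤ ksum y k) ∧ (∑ i, x i) = ∑ j, y j

section ksumAPI
variable {ι : Type*} [Fintype ι] [DecidableEq ι] (x : ι → ℝ)

lemma sum_le_ksum {S : Finset ι} {k : ℕ} (h : S.card = min k (Fintype.card ι)) :
    ∑ i ∈ S, x i ≤ ksum x k := by
  apply Finset.le_max'
  exact Finset.mem_image.mpr ⟨S, Finset.mem_powersetCard.mpr ⟨Finset.subset_univ S, h⟩, rfl⟩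

lemma exists_ksum (k : ℕ) :
    ∃ S : Finset ι, S.card = min k (Fintype.card ι) ∧ ksum x k = ∑ i ∈ S, x i := by
  have hne : ((Finset.univ.powersetCard (min k (Fintype.card ι))).image
      fun S => ∑ i ∈ S, x i).Nonempty :=
    Finset.image_nonempty.mpr
      (Finset.powersetCard_nonempty.mpr (by rw [Finset.card_univ]; exact min_le_right _ _))
  obtain ⟨S, hS, hs⟩ := Finset.mem_image.mp (Finset.max'_mem _ hne)
  rw [Finset.mem_powersetCard] at hS
  exact ⟨S, hS.2, hs.symm⟩

lemma ksum_le {k : ℕ} {B : ℝ}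
    (h : ∀ S : Finset ι, S.card = min k (Fintype.card ι) → ∑ i ∈ S, x i ≤ B) :
    ksum x k ≤ B := by
  obtain ⟨S, h1, h2⟩ := exists_ksum x k
  rw [h2]; exact h S h1

lemma ksum_of_card_le {k : ℕ} (h : Fintype.card ι ≤ k) : ksum x k = ∑ i, x i := by
  refine le_antisymm (ksum_le x fun S hS => ?_) (sum_le_ksum x (by rw [Finset.card_univ]; omega))
  have : S = Finset.univ := Finset.eq_univ_of_card S (by rw [hS]; omega)
  rw [this]

lemma sum_le_ksum_of_nonneg {S : Finset ι} {k : ℕ} (hx : ∀ i, 0 ≤ x i) (h : S.card ≤ k) :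
    ∑ i ∈ S, x i ≤ ksum x k := by
  have hcu : S.card ≤ min k (Fintype.card ι) ∨ Fintype.card ι ≤ k := by
    rcases le_or_gt (Fintype.card ι) k with h'|h'
    · right; exact h'
    · left; exact le_min h (by rw [← Finset.card_univ]; exact S.card_le_univ)
  rcases hcu with hc | hc
  · obtain ⟨T, hST, hT⟩ := Finset.exists_superset_card_eq hc (min_le_right _ _)
    calc ∑ i ∈ S, x i ≤ ∑ i ∈ T, x i :=
          Finset.sum_le_sum_of_subset_of_nonneg hST (fun i _ _ => hx i)
      _ ≤ ksum x k := sum_le_ksum x hT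
  · rw [ksum_of_card_le x hc]
    exact Finset.sum_le_sum_of_subset_of_nonneg S.subset_univ (fun i _ _ => hx i)

lemma ksum_comp_equiv {ι' : Type*} [Fintype ι'] [DecidableEq ι'] (e : ι' ≃ ι) (k : ℕ) :
    ksum (x ∘ e) k = ksum x k := by
  have hcard : Fintype.card ι' = Fintype.card ι := Fintype.card_congr e
  apply le_antisymm
  · refine ksum_le _ fun S hS => ?_
    have : ∑ i ∈ S, x (e i) = ∑ i ∈ S.image e, x i :=
      (Finset.sum_image (fun a _ b _ h => e.injective h)).symm
    exact this.le.trans (sum_le_ksum x (by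
      rw [Finset.card_image_of_injective _ e.injective, hS, hcard]))
  · refine ksum_le _ fun S hS => ?_
    have : ∑ i ∈ S, x i = ∑ i ∈ S.image e.symm, (x ∘ e) i := by
      rw [Finset.sum_image (fun a _ b _ h => e.symm.injective h)]
      simp
    exact this.le.trans (sum_le_ksum _ (by
      rw [Finset.card_image_of_injective _ e.symm.injective, hS, hcard]))

lemma ksum_nonneg (hx : ∀ i, 0 ≤ x i) (k : ℕ) : 0 ≤ ksum x k := by
  have := sum_le_ksum_of_nonneg x (S := ∅) hx (Nat.zero_le k)
  simpa using this

lemma ksum_mono (hx : ∀ i, 0 ≤ x i) : Monotone (ksum x) := by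
  intro a b hab
  obtain ⟨S, h1, h2⟩ := exists_ksum x a
  rw [h2]
  exact sum_le_ksum_of_nonneg x hx (by omega)

lemma ksum_concave (hx : ∀ i, 0 ≤ x i) (k : ℕ) :
    ksum x (k + 2) + ksum x k ≤ 2 * ksum x (k + 1) := by
  rcases le_or_gt (k + 2) (Fintype.card ι) with h | h
  · obtain ⟨A, hA, hAs⟩ := exists_ksum x (k + 2)
    obtain ⟨B, hB, hBs⟩ := exists_ksum x k
    rw [min_eq_left h] at hA
    rw [min_eq_left (by omega)] at hB
    have hcard : B.card < A.card := by omega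
    have hns : ¬ A ⊆ B := fun hsub => absurd (Finset.card_le_card hsub) (by omega)
    obtain ⟨a, haA, haB⟩ := Finset.not_subset.mp hns
    have h1 : ∑ i ∈ A.erase a, x i ≤ ksum x (k + 1) :=
      sum_le_ksum x (by rw [Finset.card_erase_of_mem haA, hA]; omega)
    have h2 : ∑ i ∈ insert a B, x i ≤ ksum x (k + 1) :=
      sum_le_ksum x (by rw [Finset.card_insert_of_notMem haB, hB]; omega)
    have e1 : ∑ i ∈ A, x i = x a + ∑ i ∈ A.erase a, x i :=
      (Finset.add_sum_erase _ _ haA).symm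
    have e2 : ∑ i ∈ insert a B, x i = x a + ∑ i ∈ B, x i :=
      Finset.sum_insert haB
    rw [hAs, hBs]
    linarith
  · have h2 : ksum x (k + 2) = ksum x (k + 1) := by
      apply le_antisymm
      · exact ksum_le x fun S hS => sum_le_ksum x (by omega)
      · exact ksum_le x fun S hS => sum_le_ksum x (by omega)
    rw [h2, two_mul]
    exact add_le_add le_rfl (ksum_mono x hx (by omega))

end ksumAPI

lemma decr_antitone {d : ℕ} (x : Fin d → ℝ) : Antitone (decr x) := by
  intro i j hij
  have := Tuple.monotone_sort x (Fin.rev_le_rev.mpr hij)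
  simpa [decr] using this

lemma decr_eq_comp {d : ℕ} (x : Fin d → ℝ) :
    decr x = x ∘ (Fin.revPerm.trans (Tuple.sort x)) := rfl

lemma comb {d : ℕ} (lam c : Fin d → ℝ) (hl : ∀ t, 0 ≤ lam t)
    (hc0 : ∀ t, 0 ≤ c t) (hc1 : ∀ t, c t ≤ 1) (k : ℕ) (hck : ∑ t, c t ≤ (k : ℝ)) :
    ∑ t, lam t * c t ≤ ksum lam k := by
  classical
  set τ : Equiv.Perm (Fin d) := Fin.revPerm.trans (Tuple.sort lam) with hτ
  set μ : Fin d → ℝ := decr lam with hμ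
  have hμτ : ∀ t, μ t = lam (τ t) := fun t => rfl
  have hμa : Antitone μ := decr_antitone lam
  have hsum : ∑ t, lam t * c t = ∑ t, μ t * c (τ t) := by
    rw [← Equiv.sum_comp τ (fun t => lam t * c t)]
    simp [hμτ]
  rw [hsum]
  rcases le_or_gt d k with hk | hk
  · calc ∑ t, μ t * c (τ t) ≤ ∑ t, μ t := by
          apply Finset.sum_le_sum
          intro t _
          have h0 := hl (τ t)
          have h1 := hc1 (τ t)
          rw [hμτ]
          nlinarith [hc0 (τ t)]
      _ = ∑ t, lam t := Equiv.sum_comp τ lam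
      _ = ksum lam k := (ksum_of_card_le lam (by simpa using hk)).symm
  · set θ : ℝ := μ ⟨k, hk⟩ with hθ
    have hθ0 : 0 ≤ θ := hl _
    have step1 : ∑ t, μ t * c (τ t) ≤ ∑ t, (θ * c (τ t) + max (μ t - θ) 0) := by
      apply Finset.sum_le_sum
      intro t _
      rcases le_or_gt θ (μ t) with h | h
      · have : max (μ t - θ) 0 = μ t - θ := max_eq_left (by linarith)
        rw [this]
        nlinarith [hc1 (τ t), hc0 (τ t)]
      · have h2 : μ t * c (τ t) ≤ θ * c (τ t) := by nlinarith [hc0 (τ t)]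
        have : (0:ℝ) ≤ max (μ t - θ) 0 := le_max_right _ _
        linarith
    have hcsum : ∑ t, c (τ t) = ∑ t, c t := Equiv.sum_comp τ c
    have step2 : ∑ t, (θ * c (τ t) + max (μ t - θ) 0)
        = θ * (∑ t, c t) + ∑ t, max (μ t - θ) 0 := by
      rw [Finset.sum_add_distrib, ← Finset.mul_sum, hcsum]
    have step3 : ∑ t, max (μ t - θ) 0 = ∑ t ∈ Finset.Iio (⟨k, hk⟩ : Fin d), (μ t - θ) := by
      rw [← Finset.sum_subset (Finset.subset_univ (Finset.Iio (⟨k, hk⟩ : Fin d)))]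
      · apply Finset.sum_congr rfl
        intro t ht
        have : t ≤ (⟨k, hk⟩ : Fin d) := le_of_lt (Finset.mem_Iio.mp ht)
        have := hμa this
        exact max_eq_left (by linarith)
      · intro t _ ht
        have : (⟨k, hk⟩ : Fin d) ≤ t := not_lt.mp (fun h => ht (Finset.mem_Iio.mpr h))
        have := hμa this
        exact max_eq_right (by linarith)
    have hcard : (Finset.Iio (⟨k, hk⟩ : Fin d)).card = k := by
      rw [Fin.card_Iio]
    have step4 : ∑ t ∈ Finset.Iio (⟨k, hk⟩ : Fin d), (μ t - θ)
        = (∑ t ∈ Finset.Iio (⟨k, hk⟩ : Fin d), μ t) - k * θ := by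
      rw [Finset.sum_sub_distrib, Finset.sum_const, hcard, nsmul_eq_mul]
    have step5 : ∑ t ∈ Finset.Iio (⟨k, hk⟩ : Fin d), μ t ≤ ksum lam k := by
      have himg : ∑ t ∈ Finset.Iio (⟨k, hk⟩ : Fin d), μ t
          = ∑ s ∈ (Finset.Iio (⟨k, hk⟩ : Fin d)).image τ, lam s := by
        rw [Finset.sum_image (fun a _ b _ h => τ.injective h)]
        exact Finset.sum_congr rfl fun t _ => hμτ t
      rw [himg]
      apply sum_le_ksum
      rw [Finset.card_image_of_injective _ τ.injective, hcard]
      simp [Fintype.card_fin]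
      omega
    have hθk : θ * (∑ t, c t) ≤ θ * k := by
      apply mul_le_mul_of_nonneg_left hck hθ0
    calc ∑ t, μ t * c (τ t) ≤ θ * (∑ t, c t) + ∑ t, max (μ t - θ) 0 := by
          rw [← step2]; exact step1
      _ ≤ θ * k + ((∑ t ∈ Finset.Iio (⟨k, hk⟩ : Fin d), μ t) - k * θ) := by
          rw [step3, step4]; linarith
      _ ≤ ksum lam k := by linarith [step5]

open scoped InnerProductSpace in
lemma parseval_onb {E : Type*} [NormedAddCommGroup E] [InnerProductSpace ℂ E]
    {ι : Type*} [Fintype ι] (b : OrthonormalBasis ι ℂ E) (x : E) :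
    ∑ t, Complex.normSq ⟪b t, x⟫_ℂ = ‖x‖^2 := by
  have h := b.sum_inner_mul_inner x x
  have h2 : ∀ t, ⟪x, b t⟫_ℂ * ⟪b t, x⟫_ℂ = (Complex.normSq ⟪b t, x⟫_ℂ : ℂ) := by
    intro t
    rw [← inner_conj_symm, Complex.normSq_eq_conj_mul_self]
  rw [Finset.sum_congr rfl (fun t _ => h2 t)] at h
  have h3 : ⟪x, x⟫_ℂ = ((‖x‖^2 : ℝ) : ℂ) := by
    rw [@inner_self_eq_norm_sq_to_K ℂ]
    norm_cast
  rw [h3] at h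
  exact_mod_cast congrArg Complex.re h

lemma normSq_inner_symm {E : Type*} [NormedAddCommGroup E] [InnerProductSpace ℂ E] (x y : E) :
    Complex.normSq (@inner ℂ _ _ x y) = Complex.normSq (@inner ℂ _ _ y x) := by
  rw [← inner_conj_symm x y, Complex.normSq_conj]

open scoped InnerProductSpace in
lemma quad_eq {E : Type*} [NormedAddCommGroup E] [InnerProductSpace ℂ E]
    {d n : ℕ} (u : OrthonormalBasis (Fin d) ℂ E) (lam : Fin d → ℝ) (F : Fin n → E)
    (heig : ∀ t, (∑ i, ⟪F i, u t⟫_ℂ • F i) = (lam t : ℂ) • (u t)) (v : E) :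
    ∑ t, lam t * Complex.normSq ⟪u t, v⟫_ℂ = ∑ i, Complex.normSq ⟪F i, v⟫_ℂ := by
  have hv : ∑ t, ⟪u t, v⟫_ℂ • u t = v := u.sum_repr' v
  have hSv : ∑ i, ⟪F i, v⟫_ℂ • F i = ∑ t, ⟪u t, v⟫_ℂ • ((lam t : ℂ) • u t) := by
    conv_lhs => rw [← hv]
    have : ∀ i, ⟪F i, ∑ t, ⟪u t, v⟫_ℂ • u t⟫_ℂ • F i
        = ∑ t, (⟪u t, v⟫_ℂ * ⟪F i, u t⟫_ℂ) • F i := by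
      intro i
      rw [inner_sum, Finset.sum_smul]
      apply Finset.sum_congr rfl
      intro t _
      rw [inner_smul_right, mul_smul]
    rw [Finset.sum_congr rfl (fun i _ => this i)]
    rw [Finset.sum_comm]
    apply Finset.sum_congr rfl
    intro t _
    rw [← heig t, Finset.smul_sum]
    apply Finset.sum_congr rfl
    intro i _
    rw [mul_smul]
  have key : (∑ t, (lam t * Complex.normSq ⟪u t, v⟫_ℂ : ℝ) : ℂ)
      = (∑ i, (Complex.normSq ⟪F i, v⟫_ℂ : ℝ) : ℂ) := by
    push_cast
    calc (∑ t, ((lam t : ℂ) * (Complex.normSq ⟪u t, v⟫_ℂ : ℂ)))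
        = ∑ t, ⟪v, ⟪u t, v⟫_ℂ • ((lam t : ℂ) • u t)⟫_ℂ := by
          apply Finset.sum_congr rfl
          intro t _
          rw [inner_smul_right, inner_smul_right, ← inner_conj_symm v (u t),
            ← Complex.mul_conj]
          ring
      _ = ⟪v, ∑ t, ⟪u t, v⟫_ℂ • ((lam t : ℂ) • u t)⟫_ℂ := (inner_sum _ _ _).symm
      _ = ⟪v, ∑ i, ⟪F i, v⟫_ℂ • F i⟫_ℂ := by rw [hSv]
      _ = ∑ i, ((Complex.normSq ⟪F i, v⟫_ℂ : ℂ)) := by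
          rw [inner_sum]
          apply Finset.sum_congr rfl
          intro i _
          rw [inner_smul_right, ← inner_conj_symm v (F i)]
          exact Complex.mul_conj _
  exact_mod_cast key

open scoped InnerProductSpace in
lemma orthonormal_coe {E : Type*} [NormedAddCommGroup E] [InnerProductSpace ℂ E]
    {ι : Type*} [Fintype ι] (V : Submodule ℂ E) (e : OrthonormalBasis ι ℂ V) :
    Orthonormal ℂ (fun s => (e s : E)) := by
  constructor
  · intro s
    have := e.orthonormal.1 s
    exact this
  · intro s s' hss
    have := e.orthonormal.2 hss
    rw [← Submodule.coe_inner]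
    exact this

open scoped InnerProductSpace in
lemma trace_generic {E : Type*} [NormedAddCommGroup E] [InnerProductSpace ℂ E]
    {d n : ℕ} (u : OrthonormalBasis (Fin d) ℂ E) (lam : Fin d → ℝ) (F : Fin n → E)
    (heig : ∀ t, (∑ i, ⟪F i, u t⟫_ℂ • F i) = (lam t : ℂ) • (u t)) :
    ∑ t, lam t = ∑ i, ‖F i‖^2 := by
  have h1 : ∀ t : Fin d, lam t = ∑ i, Complex.normSq ⟪F i, u t⟫_ℂ := by
    intro t
    have h := quad_eq u lam F heig (u t)
    rw [← h]
    rw [Finset.sum_eq_single t]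
    · have hnorm : ‖u t‖ = 1 := u.orthonormal.1 t
      have h2 : ⟪u t, u t⟫_ℂ = 1 := by
        rw [inner_self_eq_norm_sq_to_K, hnorm]; norm_num
      rw [h2]
      simp
    · intro s _ hst
      rw [u.orthonormal.2 hst]
      simp
    · intro h; exact absurd (Finset.mem_univ t) h
  calc ∑ t, lam t = ∑ t, ∑ i, Complex.normSq ⟪F i, u t⟫_ℂ :=
        Finset.sum_congr rfl fun t _ => h1 t
    _ = ∑ i, ∑ t, Complex.normSq ⟪u t, F i⟫_ℂ := by
        rw [Finset.sum_comm]
        exact Finset.sum_congr rfl fun i _ => Finset.sum_congr rfl fun t _ =>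
          normSq_inner_symm _ _
    _ = ∑ i, ‖F i‖^2 := Finset.sum_congr rfl fun i _ => parseval_onb u (F i)

open scoped InnerProductSpace in
lemma kyfan_generic {E : Type*} [NormedAddCommGroup E] [InnerProductSpace ℂ E]
    [FiniteDimensional ℂ E]
    {d n : ℕ} (u : OrthonormalBasis (Fin d) ℂ E) (lam : Fin d → ℝ) (hlam : ∀ t, 0 ≤ lam t)
    (F : Fin n → E)
    (heig : ∀ t, (∑ i, ⟪F i, u t⟫_ℂ • F i) = (lam t : ℂ) • (u t))
    (T : Finset (Fin n)) (k : ℕ) (hk : T.card ≤ k) :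
    ∑ i ∈ T, ‖F i‖^2 ≤ ksum lam k := by
  classical
  set V : Submodule ℂ E := Submodule.span ℂ ((T.image F : Finset E) : Set E) with hV
  set s0 : ℕ := Module.finrank ℂ V with hs0def
  have hs0 : s0 ≤ k :=
    le_trans (le_trans (finrank_span_finset_le_card (T.image F)) Finset.card_image_le) hk
  set e : OrthonormalBasis (Fin s0) ℂ V := stdOrthonormalBasis ℂ V with he
  set c : Fin d → ℝ := fun t => ∑ s, Complex.normSq ⟪u t, (e s : E)⟫_ℂ with hc
  have hc0 : ∀ t, 0 ≤ c t := fun t => Finset.sum_nonneg fun s _ => Complex.normSq_nonneg _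
  have hc1 : ∀ t, c t ≤ 1 := by
    intro t
    have hb := (orthonormal_coe V e).sum_inner_products_le (s := Finset.univ) (u t)
    have hnorm : ‖u t‖ = 1 := u.orthonormal.1 t
    rw [hnorm] at hb
    have : c t = ∑ s, ‖⟪(e s : E), u t⟫_ℂ‖^2 := by
      apply Finset.sum_congr rfl
      intro s _
      rw [normSq_inner_symm, ← Complex.sq_norm]
    rw [this]
    simpa using hb
  have hcsum : ∑ t, c t ≤ (k : ℝ) := by
    have : ∑ t, c t = (s0 : ℝ) := by
      rw [hc]
      rw [Finset.sum_comm]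
      have : ∀ s : Fin s0, ∑ t, Complex.normSq ⟪u t, (e s : E)⟫_ℂ = 1 := by
        intro s
        rw [parseval_onb u ((e s : E))]
        have : ‖(e s : E)‖ = 1 := by
          have := e.orthonormal.1 s
          exact this
        rw [this]; norm_num
      rw [Finset.sum_congr rfl fun s _ => this s]
      simp
    rw [this]
    exact_mod_cast hs0
  have hmain : ∑ i ∈ T, ‖F i‖^2 ≤ ∑ t, lam t * c t := by
    have h1 : ∑ t, lam t * c t = ∑ i, ∑ s, Complex.normSq ⟪F i, (e s : E)⟫_ℂ := by
      calc ∑ t, lam t * c t = ∑ s, ∑ t, lam t * Complex.normSq ⟪u t, (e s : E)⟫_ℂ := by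
            rw [hc]
            simp_rw [Finset.mul_sum]
            rw [Finset.sum_comm]
        _ = ∑ s, ∑ i, Complex.normSq ⟪F i, (e s : E)⟫_ℂ :=
            Finset.sum_congr rfl fun s _ => quad_eq u lam F heig _
        _ = ∑ i, ∑ s, Complex.normSq ⟪F i, (e s : E)⟫_ℂ := Finset.sum_comm
    rw [h1]
    have h2 : ∀ i ∈ T, ‖F i‖^2 = ∑ s, Complex.normSq ⟪F i, (e s : E)⟫_ℂ := by
      intro i hi
      have hmem : F i ∈ V := Submodule.subset_span (by
        simp only [Finset.coe_image, Set.mem_image, Finset.mem_coe]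
        exact ⟨i, hi, rfl⟩)
      set w : V := ⟨F i, hmem⟩ with hw
      have : ∀ s : Fin s0, ⟪F i, (e s : E)⟫_ℂ = ⟪w, e s⟫_ℂ := by
        intro s
        rw [Submodule.coe_inner]
      rw [Finset.sum_congr rfl fun s _ => by rw [this s, normSq_inner_symm]]
      have hp := parseval_onb e w
      have hnw : ‖w‖ = ‖F i‖ := rfl
      rw [hnw] at hp
      exact hp.symm
    calc ∑ i ∈ T, ‖F i‖^2 = ∑ i ∈ T, ∑ s, Complex.normSq ⟪F i, (e s : E)⟫_ℂ :=
          Finset.sum_congr rfl h2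
      _ ≤ ∑ i, ∑ s, Complex.normSq ⟪F i, (e s : E)⟫_ℂ :=
          Finset.sum_le_sum_of_subset_of_nonneg (Finset.subset_univ T)
            (fun i _ _ => Finset.sum_nonneg fun s _ => Complex.normSq_nonneg _)
  exact le_trans hmain (comb lam c hlam hc0 hc1 k hcsum)

section euclid
open scoped InnerProductSpace
variable {k n : ℕ} (f : Fin n → Fin k → ℂ)

/-- the vectors of `f` as elements of Euclidean space -/
noncomputable def Fv : Fin n → EuclideanSpace ℂ (Fin k) := fun i => WithLp.toLp 2 (f i)

lemma inner_Fv (i : Fin n) (v : EuclideanSpace ℂ (Fin k)) :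
    ⟪Fv f i, v⟫_ℂ = ∑ b, (starRingEnd ℂ) (f i b) * v b := by
  rw [PiLp.inner_apply]
  simp only [RCLike.inner_apply]
  exact Finset.sum_congr rfl fun b _ => mul_comm _ _

lemma sum_inner_smul_eq_mulVec (v : EuclideanSpace ℂ (Fin k)) :
    WithLp.ofLp (∑ i, ⟪Fv f i, v⟫_ℂ • Fv f i) = (frameOp f).mulVec (WithLp.ofLp v) := by
  funext a
  have hl : WithLp.ofLp (∑ i, ⟪Fv f i, v⟫_ℂ • Fv f i) a = ∑ i, ⟪Fv f i, v⟫_ℂ * f i a := by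
    rw [WithLp.ofLp_sum, Finset.sum_apply]
    rfl
  rw [hl]
  have hr : (frameOp f).mulVec (WithLp.ofLp v) a = ∑ b, (∑ i, f i a * (starRingEnd ℂ) (f i b)) * v b := by
    simp [Matrix.mulVec, dotProduct, frameOp, Matrix.sum_apply]
  rw [hr]
  simp_rw [inner_Fv, Finset.sum_mul]
  rw [Finset.sum_comm]
  apply Finset.sum_congr rfl
  intro i _
  apply Finset.sum_congr rfl
  intro b _
  ring

lemma heig_frame (t : Fin k) :
    (∑ i, ⟪Fv f i, (frameOp_isHermitian f).eigenvectorBasis t⟫_ℂ • Fv f i)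
      = (((frameOp_isHermitian f).eigenvalues t : ℂ) : ℂ) •
          (frameOp_isHermitian f).eigenvectorBasis t := by
  apply WithLp.ofLp_injective 2
  rw [sum_inner_smul_eq_mulVec]
  have h2 := (frameOp_isHermitian f).mulVec_eigenvectorBasis t
  have h3 : (((frameOp_isHermitian f).eigenvalues t : ℂ)) •
      ((frameOp_isHermitian f).eigenvectorBasis t)
      = ((frameOp_isHermitian f).eigenvalues t) •
        ((frameOp_isHermitian f).eigenvectorBasis t) :=
    Complex.coe_smul _ _
  rw [h3, WithLp.ofLp_smul]
  exact h2

lemma sqNorm_eq_norm (i : Fin n) : sqNorm (f i) = ‖Fv f i‖^2 := by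
  have h1 : ⟪Fv f i, Fv f i⟫_ℂ = ((sqNorm (f i) : ℝ) : ℂ) := by
    rw [inner_Fv]
    unfold sqNorm
    push_cast
    apply Finset.sum_congr rfl
    intro b _
    rw [Complex.normSq_eq_conj_mul_self]
    rfl
  have h2 : ⟪Fv f i, Fv f i⟫_ℂ = ((‖Fv f i‖^2 : ℝ) : ℂ) := by
    rw [@inner_self_eq_norm_sq_to_K ℂ]
    norm_cast
  rw [h1] at h2
  exact_mod_cast h2

lemma spec_perm : spec f = (frameOp_isHermitian f).eigenvalues ∘
    (Fin.revPerm.trans (Tuple.sort ((frameOp_isHermitian f).eigenvalues))) := rfl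

lemma ksum_spec_eq (k' : ℕ) :
    ksum (spec f) k' = ksum ((frameOp_isHermitian f).eigenvalues) k' := by
  rw [spec_perm]
  exact ksum_comp_equiv _ _ k'

lemma eigenvalues_nonneg' (t : Fin k) : 0 ≤ (frameOp_isHermitian f).eigenvalues t := by
  set u := (frameOp_isHermitian f).eigenvectorBasis
  set lam := (frameOp_isHermitian f).eigenvalues
  have h := quad_eq u lam (Fv f) (heig_frame f) (u t)
  have hdiag : ∑ s, lam s * Complex.normSq ⟪u s, u t⟫_ℂ = lam t := by
    rw [Finset.sum_eq_single t]
    · have hnorm : ‖u t‖ = 1 := u.orthonormal.1 t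
      have h2 : ⟪u t, u t⟫_ℂ = 1 := by
        rw [inner_self_eq_norm_sq_to_K, hnorm]; norm_num
      rw [h2]; simp
    · intro s _ hst
      rw [u.orthonormal.2 hst]
      simp
    · intro h; exact absurd (Finset.mem_univ t) h
  rw [hdiag] at h
  rw [h]
  exact Finset.sum_nonneg fun i _ => Complex.normSq_nonneg _

lemma spec_nonneg (t : Fin k) : 0 ≤ spec f t := eigenvalues_nonneg' f _

lemma sum_spec : ∑ t, spec f t = ∑ i, sqNorm (f i) := by
  have h : ∑ t, spec f t = ∑ t, (frameOp_isHermitian f).eigenvalues t :=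
    Equiv.sum_comp (Fin.revPerm.trans (Tuple.sort ((frameOp_isHermitian f).eigenvalues)))
      ((frameOp_isHermitian f).eigenvalues)
  rw [h]
  rw [trace_generic ((frameOp_isHermitian f).eigenvectorBasis)
    ((frameOp_isHermitian f).eigenvalues) (Fv f) (heig_frame f)]
  exact Finset.sum_congr rfl fun i _ => (sqNorm_eq_norm f i).symm

lemma kyfan (T : Finset (Fin n)) (k' : ℕ) (hk : T.card ≤ k') :
    ∑ i ∈ T, sqNorm (f i) ≤ ksum (spec f) k' := by
  rw [ksum_spec_eq]
  have := kyfan_generic ((frameOp_isHermitian f).eigenvectorBasis)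
    ((frameOp_isHermitian f).eigenvalues) (eigenvalues_nonneg' f) (Fv f) (heig_frame f) T k' hk
  calc ∑ i ∈ T, sqNorm (f i) = ∑ i ∈ T, ‖Fv f i‖^2 :=
        Finset.sum_congr rfl fun i _ => sqNorm_eq_norm f i
    _ ≤ _ := this

end euclid

lemma sqNorm_nonneg {k : ℕ} (v : Fin k → ℂ) : 0 ≤ sqNorm v :=
  Finset.sum_nonneg fun _ _ => Complex.normSq_nonneg _

lemma card_filter_val_lt (n v : ℕ) (hv : v ≤ n) :
    (Finset.univ.filter fun i : Fin n => (i : ℕ) < v).card = v := by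
  classical
  have h : (Finset.univ.filter fun i : Fin n => (i : ℕ) < v).card = (Finset.range v).card := by
    apply Finset.card_bij (fun (a : Fin n) _ => (a : ℕ))
    · intro a ha
      simp only [Finset.mem_filter] at ha
      exact Finset.mem_range.mpr ha.2
    · intro a _ b _ hab
      exact Fin.ext hab
    · intro b hb
      refine ⟨⟨b, lt_of_lt_of_le (Finset.mem_range.mp hb) hv⟩, ?_, rfl⟩
      simp [Finset.mem_range.mp hb]
  rw [h, Finset.card_range]

lemma find_window (K : ℕ → ℕ) : ∀ p k : ℕ, 0 < p → K 0 ≤ k → k ≤ K p →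
    ∃ L, L < p ∧ K L ≤ k ∧ k ≤ K (L + 1) := by
  intro p
  induction p with
  | zero => intro k h; omega
  | succ q ih =>
    intro k _ hk0 hkp
    rcases Nat.eq_zero_or_pos q with rfl | hq
    · exact ⟨0, by omega, hk0, hkp⟩
    · rcases le_or_gt k (K q) with h | h
      · obtain ⟨L, h1, h2, h3⟩ := ih k hq hk0 h
        exact ⟨L, by omega, h2, h3⟩
      · exact ⟨q, by omega, le_of_lt h, hkp⟩

lemma avg_antitone (D : ℕ → ℝ) (hD : Antitone D) {a b : ℕ} (hab : a ≤ b) :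
    (a : ℝ) * ∑ j ∈ Finset.range b, D j ≤ (b : ℝ) * ∑ j ∈ Finset.range a, D j := by
  have hsplit := Finset.sum_range_add_sum_Ico D hab
  set X := ∑ j ∈ Finset.range a, D j with hX
  set Y := ∑ j ∈ Finset.Ico a b, D j with hY
  have hYle : Y ≤ ((b : ℝ) - a) * D a := by
    have h1 : ∀ j ∈ Finset.Ico a b, D j ≤ D a := fun j hj => hD (Finset.mem_Ico.mp hj).1
    calc Y ≤ ∑ _j ∈ Finset.Ico a b, D a := Finset.sum_le_sum h1
      _ = ((b - a : ℕ) : ℝ) * D a := by rw [Finset.sum_const, Nat.card_Ico, nsmul_eq_mul]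
      _ = ((b : ℝ) - a) * D a := by rw [Nat.cast_sub hab]
  have hXge : (a : ℝ) * D a ≤ X := by
    have h1 : ∀ j ∈ Finset.range a, D a ≤ D j := fun j hj =>
      hD (le_of_lt (Finset.mem_range.mp hj))
    calc (a : ℝ) * D a = ∑ _j ∈ Finset.range a, D a := by
          rw [Finset.sum_const, Finset.card_range, nsmul_eq_mul]
      _ ≤ X := Finset.sum_le_sum h1
  rw [← hsplit]
  have ha0 : (0 : ℝ) ≤ a := Nat.cast_nonneg a
  have hba : (a : ℝ) ≤ b := Nat.cast_le.mpr hab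
  nlinarith [mul_le_mul_of_nonneg_left hYle ha0, mul_le_mul_of_nonneg_left hXge (by linarith : (0:ℝ) ≤ (b:ℝ) - a)]

lemma chord (F : ℕ → ℝ) (hconc : ∀ k, F (k + 2) + F k ≤ 2 * F (k + 1)) (K1 a b : ℕ)
    (hab : a ≤ b) :
    (a : ℝ) * (F (K1 + b) - F K1) ≤ (b : ℝ) * (F (K1 + a) - F K1) := by
  set D : ℕ → ℝ := fun j => F (K1 + j + 1) - F (K1 + j) with hD
  have hanti : Antitone D := by
    apply antitone_nat_of_succ_le
    intro j
    have h := hconc (K1 + j)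
    simp only [hD, show K1 + (j + 1) + 1 = K1 + j + 2 from by omega,
      show K1 + (j + 1) = K1 + j + 1 from by omega]
    linarith
  have htel : ∀ t : ℕ, ∑ j ∈ Finset.range t, D j = F (K1 + t) - F K1 := by
    intro t
    have h := Finset.sum_range_sub (fun s => F (K1 + s)) t
    simp only [hD]
    simp only [show ∀ i : ℕ, K1 + (i + 1) = K1 + i + 1 from fun i => by omega] at h
    simpa using h
  have h := avg_antitone D hanti hab
  rw [htel a, htel b] at h
  exact h

/-- A design Φ^op whose spectra form the block-constant vector
(γ_ℓ 1_{r_ℓ})_ℓ described by the breakpoints g and satisfying the block-mass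
equations majorizes-minimally: Λ_{Φ^op} ≺ Λ_Φ for every (α,d)-design Φ. -/
theorem stmt16 {n m : ℕ} (hm : 0 < m)
    (α : Fin n → ℝ) (hαs : Antitone α) (hα0 : ∀ i, 0 < α i)
    (d : Fin m → ℕ) (hd : Antitone d) (hdn : ∀ j, d j ≤ n)
    (Φop : (j : Fin m) → Fin n → Fin (d j) → ℂ)
    (hop : ∀ i, (∑ j, sqNorm (Φop j i)) = α i)
    (p : ℕ) (hp : 0 < p)
    (γ : Fin p → ℝ) (hγ : StrictAnti γ) (hγ0 : ∀ ℓ, 0 < γ ℓ)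
    (g : Fin (p + 1) → ℕ) (hg0 : g 0 = 0) (hgmono : StrictMono g)
    (hglast : g (Fin.last p) = d ⟨0, hm⟩)
    (r : Fin p → ℕ)
    (hr : ∀ ℓ : Fin p, r ℓ = ∑ j, (min (g ℓ.succ) (d j) - g ℓ.castSucc))
    (hspec : ∀ jq : Σ j : Fin m, Fin (d j), ∃ ℓ, spec (Φop jq.1) jq.2 = γ ℓ)
    (hcount : ∀ ℓ : Fin p,
      (Finset.univ.filter (fun jq : Σ j : Fin m, Fin (d j) =>
        spec (Φop jq.1) jq.2 = γ ℓ)).card = r ℓ)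
    (hblock : ∀ ℓ : Fin p, (ℓ : ℕ) + 1 < p →
      (r ℓ : ℝ) * γ ℓ =
        ∑ i ∈ Finset.univ.filter (fun i : Fin n =>
          g ℓ.castSucc ≤ (i : ℕ) ∧ (i : ℕ) < g ℓ.succ), α i)
    (hlastblock :
      ((r ⟨p - 1, by omega⟩ : ℕ) : ℝ) * γ ⟨p - 1, by omega⟩ =
        ∑ i ∈ Finset.univ.filter (fun i : Fin n =>
          g (Fin.castSucc ⟨p - 1, by omega⟩) ≤ (i : ℕ)), α i)
    (Φ : (j : Fin m) → Fin n → Fin (d j) → ℂ)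
    (hΦ : ∀ i, (∑ j, sqNorm (Φ j i)) = α i) :
    MajF (fun jq : Σ j : Fin m, Fin (d j) => spec (Φop jq.1) jq.2)
         (fun jq : Σ j : Fin m, Fin (d j) => spec (Φ jq.1) jq.2) := by
  set x : (Σ j : Fin m, Fin (d j)) → ℝ := fun jq => spec (Φop jq.1) jq.2 with hx
  set y : (Σ j : Fin m, Fin (d j)) → ℝ := fun jq => spec (Φ jq.1) jq.2 with hy
  have hsumx : ∑ jq, x jq = ∑ i, α i := by
    rw [← Finset.univ_sigma_univ, Finset.sum_sigma]
    calc ∑ j, ∑ q, spec (Φop j) q = ∑ j, ∑ i, sqNorm (Φop j i) :=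
          Finset.sum_congr rfl fun j _ => sum_spec _
      _ = ∑ i, ∑ j, sqNorm (Φop j i) := Finset.sum_comm
      _ = ∑ i, α i := Finset.sum_congr rfl fun i _ => hop i
  have hsumy : ∑ jq, y jq = ∑ i, α i := by
    rw [← Finset.univ_sigma_univ, Finset.sum_sigma]
    calc ∑ j, ∑ q, spec (Φ j) q = ∑ j, ∑ i, sqNorm (Φ j i) :=
          Finset.sum_congr rfl fun j _ => sum_spec _
      _ = ∑ i, ∑ j, sqNorm (Φ j i) := Finset.sum_comm
      _ = ∑ i, α i := Finset.sum_congr rfl fun i _ => hΦ i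
  have hx0 : ∀ jq, 0 ≤ x jq := fun jq => spec_nonneg _ _
  have hy0 : ∀ jq, 0 ≤ y jq := fun jq => spec_nonneg _ _
  have hcard : Fintype.card (Σ j : Fin m, Fin (d j)) = ∑ j, d j := by
    simp [Fintype.card_sigma]
  have hp1 : ∀ t : ℕ, min t p < p + 1 := fun t => by omega
  set G : ℕ → ℕ := fun t => g ⟨min t p, hp1 t⟩ with hG
  set K : ℕ → ℕ := fun t => ∑ j, min (G t) (d j) with hK
  set C : ℕ → ℝ := fun t =>
    ∑ s ∈ Finset.univ.filter (fun s : Fin p => (s : ℕ) < t), (r s : ℝ) * γ s with hC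
  have hGval : ∀ (t : ℕ) (ht : t ≤ p), G t = g ⟨t, by omega⟩ := by
    intro t ht
    simp only [hG]
    congr 1
    exact Fin.ext (by simp; omega)
  have hGmono : ∀ s t : ℕ, s ≤ t → G s ≤ G t := by
    intro s t hst
    exact hgmono.monotone (by simp [Fin.le_def]; omega)
  have hGn : ∀ t, G t ≤ n := by
    intro t
    calc G t ≤ g (Fin.last p) := hgmono.monotone (by simp [Fin.le_def, Fin.last])
      _ = d ⟨0, hm⟩ := hglast
      _ ≤ n := hdn _
  have hG0 : G 0 = 0 := by
    rw [hGval 0 (by omega), show (⟨0, by omega⟩ : Fin (p + 1)) = 0 from Fin.ext rfl, hg0]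
  have hK0 : K 0 = 0 := by
    simp [hK, hG0]
  have hGp : G p = d ⟨0, hm⟩ := by
    rw [hGval p le_rfl, show (⟨p, by omega⟩ : Fin (p + 1)) = Fin.last p from Fin.ext rfl, hglast]
  have hKp : K p = Fintype.card (Σ j : Fin m, Fin (d j)) := by
    rw [hcard, hK]
    apply Finset.sum_congr rfl
    intro j _
    rw [hGp]
    exact min_eq_right (hd (by simp [Fin.le_def]))
  have hKle : ∀ t, K t ≤ Fintype.card (Σ j : Fin m, Fin (d j)) := by
    intro t
    rw [hcard, hK]
    exact Finset.sum_le_sum fun j _ => min_le_right _ _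
  have hKsucc : ∀ (t : ℕ) (ht : t < p), K (t + 1) = K t + r ⟨t, ht⟩ := by
    intro t ht
    rw [hr ⟨t, ht⟩, hK]
    rw [← Finset.sum_add_distrib]
    apply Finset.sum_congr rfl
    intro j _
    have e1 : G (t + 1) = g (Fin.succ ⟨t, ht⟩) := by
      rw [hGval (t + 1) (by omega)]
      congr 1
    have e2 : G t = g (Fin.castSucc ⟨t, ht⟩) := by
      rw [hGval t (by omega)]
      congr 1
    have hle : g (Fin.castSucc ⟨t, ht⟩) ≤ g (Fin.succ ⟨t, ht⟩) :=
      le_of_lt (hgmono Fin.castSucc_lt_succ)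
    rw [e1, e2]
    omega
  have hKsum : ∀ t : ℕ, t ≤ p →
      K t = ∑ s ∈ Finset.univ.filter (fun s : Fin p => (s : ℕ) < t), r s := by
    intro t
    induction t with
    | zero => intro _; simpa using hK0
    | succ q ih =>
      intro hq
      have hq' : q < p := by omega
      rw [hKsucc q hq', ih (by omega)]
      have hins : Finset.univ.filter (fun s : Fin p => (s : ℕ) < q + 1)
          = insert (⟨q, hq'⟩ : Fin p) (Finset.univ.filter (fun s : Fin p => (s : ℕ) < q)) := by
        ext s
        simp [Fin.ext_iff]
        omega
      rw [hins, Finset.sum_insert (by simp)]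
      exact Nat.add_comm _ _
  have hCsucc : ∀ (t : ℕ) (ht : t < p), C (t + 1) = C t + (r ⟨t, ht⟩ : ℝ) * γ ⟨t, ht⟩ := by
    intro t ht
    have hins : Finset.univ.filter (fun s : Fin p => (s : ℕ) < t + 1)
        = insert (⟨t, ht⟩ : Fin p) (Finset.univ.filter (fun s : Fin p => (s : ℕ) < t)) := by
      ext s
      simp [Fin.ext_iff]
      omega
    rw [hC]
    simp only []
    rw [hins, Finset.sum_insert (by simp)]
    exact add_comm _ _
  have hCα : ∀ t : ℕ, t < p →
      C t = ∑ i ∈ Finset.univ.filter (fun i : Fin n => (i : ℕ) < G t), α i := by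
    intro t
    induction t with
    | zero =>
      intro _
      rw [hG0]
      simp [hC]
    | succ q ih =>
      intro hq1
      have hq : q < p := by omega
      rw [hCsucc q hq, ih (by omega)]
      have hb := hblock ⟨q, hq⟩ (by simpa using hq1)
      have e1 : G q = g (Fin.castSucc ⟨q, hq⟩) := by
        rw [hGval q (by omega)]
        congr 1
      have e2 : G (q + 1) = g (Fin.succ ⟨q, hq⟩) := by
        rw [hGval (q + 1) (by omega)]
        congr 1
      rw [← e1, ← e2] at hb
      rw [hb]
      have hmono : G q ≤ G (q + 1) := hGmono q (q + 1) (by omega)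
      have hsplit : Finset.univ.filter (fun i : Fin n => (i : ℕ) < G (q + 1))
          = Finset.univ.filter (fun i : Fin n => (i : ℕ) < G q)
            ∪ Finset.univ.filter (fun i : Fin n => G q ≤ (i : ℕ) ∧ (i : ℕ) < G (q + 1)) := by
        ext i
        simp
        omega
      rw [hsplit, Finset.sum_union (by
        rw [Finset.disjoint_left]
        intro i hi1 hi2
        simp at hi1 hi2
        omega)]
  have hCp : C p = ∑ i, α i := by
    have hpm : p - 1 < p := by omega
    have hstep := hCsucc (p - 1) hpm
    rw [show p - 1 + 1 = p from by omega] at hstep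
    rw [hstep, hCα (p - 1) hpm]
    have hlb : ((r ⟨p - 1, hpm⟩ : ℕ) : ℝ) * γ ⟨p - 1, hpm⟩ =
        ∑ i ∈ Finset.univ.filter (fun i : Fin n =>
          g (Fin.castSucc ⟨p - 1, hpm⟩) ≤ (i : ℕ)), α i := hlastblock
    have e1 : G (p - 1) = g (Fin.castSucc ⟨p - 1, hpm⟩) := by
      rw [hGval (p - 1) (by omega)]
      congr 1
    rw [← e1] at hlb
    rw [hlb]
    have hsplit : (Finset.univ : Finset (Fin n))
        = Finset.univ.filter (fun i : Fin n => (i : ℕ) < G (p - 1))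
          ∪ Finset.univ.filter (fun i : Fin n => G (p - 1) ≤ (i : ℕ)) := by
      ext i
      simp
      omega
    conv_rhs => rw [hsplit]
    rw [Finset.sum_union (by
      rw [Finset.disjoint_left]
      intro i hi1 hi2
      simp at hi1 hi2
      omega)]
  have hblockbound : ∀ t : ℕ, t < p → ∀ j : Fin m,
      ∑ i ∈ Finset.univ.filter (fun i : Fin n => (i : ℕ) < G t), sqNorm (Φ j i)
        ≤ ksum (spec (Φ j)) (min (G t) (d j)) := by
    intro t ht j
    rcases le_or_gt (G t) (d j) with hle | hlt
    · rw [min_eq_left hle]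
      apply kyfan
      rw [card_filter_val_lt n (G t) (hGn t)]
    · rw [min_eq_right (le_of_lt hlt)]
      have h1 : ksum (spec (Φ j)) (d j) = ∑ q, spec (Φ j) q :=
        ksum_of_card_le _ (by simp)
      rw [h1, sum_spec]
      exact Finset.sum_le_sum_of_subset_of_nonneg (Finset.subset_univ _)
        (fun i _ _ => sqNorm_nonneg _)
  have hbp : ∀ t : ℕ, t ≤ p → C t ≤ ksum y (K t) := by
    intro t ht
    rcases eq_or_lt_of_le ht with rfl | htlt
    · rw [hCp]
      have : ksum y (K t) = ∑ jq, y jq := by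
        rw [hKp]
        exact ksum_of_card_le y le_rfl
      rw [this, hsumy]
    · choose S hScard hSsum using fun j : Fin m => exists_ksum (spec (Φ j)) (min (G t) (d j))
      have hScard' : ∀ j, (S j).card = min (G t) (d j) := by
        intro j
        rw [hScard j]
        simp only [Fintype.card_fin]
        omega
      have hSScard : (Finset.univ.sigma S).card = K t := by
        rw [Finset.card_sigma]
        rw [hK]
        exact Finset.sum_congr rfl fun j _ => hScard' j
      have hSSsum : ∑ jq ∈ Finset.univ.sigma S, y jq
          = ∑ j, ksum (spec (Φ j)) (min (G t) (d j)) := by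
        rw [Finset.sum_sigma]
        exact Finset.sum_congr rfl fun j _ => (hSsum j).symm
      have h1 : C t ≤ ∑ j, ksum (spec (Φ j)) (min (G t) (d j)) := by
        rw [hCα t htlt]
        calc ∑ i ∈ Finset.univ.filter (fun i : Fin n => (i : ℕ) < G t), α i
            = ∑ i ∈ Finset.univ.filter (fun i : Fin n => (i : ℕ) < G t),
                ∑ j, sqNorm (Φ j i) :=
              Finset.sum_congr rfl fun i _ => (hΦ i).symm
          _ = ∑ j, ∑ i ∈ Finset.univ.filter (fun i : Fin n => (i : ℕ) < G t),
                sqNorm (Φ j i) := Finset.sum_comm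
          _ ≤ ∑ j, ksum (spec (Φ j)) (min (G t) (d j)) :=
              Finset.sum_le_sum fun j _ => hblockbound t htlt j
      have h2 : ∑ jq ∈ Finset.univ.sigma S, y jq ≤ ksum y (K t) := by
        apply sum_le_ksum
        rw [hSScard]
        have := hKle t
        omega
      rw [hSSsum] at h2
      linarith
  choose lev hlev using hspec
  have hlev_unique : ∀ jq t, x jq = γ t ↔ lev jq = t := by
    intro jq t
    constructor
    · intro h
      exact hγ.injective (by rw [← hlev jq]; exact h)
    · intro h
      show spec (Φop jq.1) jq.2 = γ t
      rw [hlev jq, h]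
  have hfiber : ∀ t : Fin p,
      (Finset.univ.filter (fun jq : Σ j : Fin m, Fin (d j) => lev jq = t)).card = r t := by
    intro t
    rw [← hcount t]
    congr 1
    ext jq
    simp only [Finset.mem_filter, Finset.mem_univ, true_and]
    exact (hlev_unique jq t).symm
  have hxup : ∀ (k' L : ℕ) (hL : L < p), K L ≤ k' → k' ≤ K (L + 1) →
      ksum x k' ≤ C L + γ ⟨L, hL⟩ * ((k' : ℝ) - (K L : ℝ)) := by
    intro k' L hL h1 h2
    apply ksum_le
    intro S hS
    have hScard : S.card = k' := by
      rw [hS]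
      have := hKle (L + 1)
      omega
    have hdec : S.card = ∑ t : Fin p, (S.filter (fun jq => lev jq = t)).card :=
      Finset.card_eq_sum_card_fiberwise (fun jq _ => Finset.mem_univ (lev jq))
    set nn : Fin p → ℝ := fun t => ((S.filter (fun jq => lev jq = t)).card : ℝ) with hnn
    have hsum : ∑ jq ∈ S, x jq = ∑ t : Fin p, γ t * nn t := by
      rw [← Finset.sum_fiberwise S lev x]
      apply Finset.sum_congr rfl
      intro t _
      have : ∀ jq ∈ S.filter (fun jq => lev jq = t), x jq = γ t := by
        intro jq hjq
        have h2 := (Finset.mem_filter.mp hjq).2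
        show spec (Φop jq.1) jq.2 = γ t
        rw [hlev jq, h2]
      rw [Finset.sum_congr rfl this, Finset.sum_const, nsmul_eq_mul, hnn]
      ring
    have hnle : ∀ t, nn t ≤ (r t : ℝ) := by
      intro t
      rw [hnn]
      simp only []
      rw [← hfiber t]
      exact_mod_cast Finset.card_le_card (Finset.filter_subset_filter _ (Finset.subset_univ S))
    have hnn0 : ∀ t, 0 ≤ nn t := fun t => Nat.cast_nonneg _
    have hntot : ∑ t, nn t = (k' : ℝ) := by
      rw [hnn]
      rw [← hScard, hdec]
      push_cast
      rfl
    set A : Finset (Fin p) := Finset.univ.filter (fun t : Fin p => (t : ℕ) < L) with hA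
    have hCL : C L = ∑ t ∈ A, (r t : ℝ) * γ t := rfl
    have hKLr : (K L : ℝ) = ∑ t ∈ A, (r t : ℝ) := by
      rw [hKsum L (le_of_lt hL)]
      push_cast
      rfl
    have hg1 : ∀ t ∈ A, γ t * nn t ≤ γ t * (r t : ℝ) + γ ⟨L, hL⟩ * (nn t - (r t : ℝ)) := by
      intro t htA
      have htL : (t : ℕ) < L := by
        rw [hA] at htA
        simpa using htA
      have hγle : γ ⟨L, hL⟩ ≤ γ t := hγ.antitone (by simp [Fin.le_def]; omega)
      nlinarith [mul_nonneg (sub_nonneg.mpr hγle) (sub_nonneg.mpr (hnle t))]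
    have hg2 : ∀ t ∈ Finset.univ.filter (fun t : Fin p => ¬ (t : ℕ) < L),
        γ t * nn t ≤ γ ⟨L, hL⟩ * nn t := by
      intro t htA
      have htL : L ≤ (t : ℕ) := by
        simp at htA
        omega
      have hγle : γ t ≤ γ ⟨L, hL⟩ := hγ.antitone (by simp [Fin.le_def]; omega)
      exact mul_le_mul_of_nonneg_right hγle (hnn0 t)
    have hnsplit : ∑ t ∈ A, nn t + ∑ t ∈ Finset.univ.filter (fun t : Fin p => ¬ (t : ℕ) < L), nn t
        = (k' : ℝ) := by
      rw [hA, Finset.sum_filter_add_sum_filter_not, hntot]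
    calc ∑ jq ∈ S, x jq = ∑ t : Fin p, γ t * nn t := hsum
      _ = ∑ t ∈ A, γ t * nn t
          + ∑ t ∈ Finset.univ.filter (fun t : Fin p => ¬ (t : ℕ) < L), γ t * nn t := by
          rw [hA, Finset.sum_filter_add_sum_filter_not]
      _ ≤ (∑ t ∈ A, (γ t * (r t : ℝ) + γ ⟨L, hL⟩ * (nn t - (r t : ℝ))))
          + ∑ t ∈ Finset.univ.filter (fun t : Fin p => ¬ (t : ℕ) < L), γ ⟨L, hL⟩ * nn t :=
          add_le_add (Finset.sum_le_sum hg1) (Finset.sum_le_sum hg2)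
      _ = C L + γ ⟨L, hL⟩ * ((∑ t ∈ A, nn t
            + ∑ t ∈ Finset.univ.filter (fun t : Fin p => ¬ (t : ℕ) < L), nn t)
            - ∑ t ∈ A, (r t : ℝ)) := by
          rw [hCL, Finset.sum_add_distrib]
          rw [← Finset.mul_sum, ← Finset.mul_sum, Finset.sum_sub_distrib]
          have e : ∑ t ∈ A, γ t * (r t : ℝ) = ∑ t ∈ A, (r t : ℝ) * γ t :=
            Finset.sum_congr rfl fun t _ => mul_comm _ _
          rw [e]
          ring
      _ = C L + γ ⟨L, hL⟩ * ((k' : ℝ) - (K L : ℝ)) := by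
          rw [hnsplit, hKLr]
  constructor
  · intro k'
    rcases le_or_gt k' (K p) with hk | hk
    · obtain ⟨L, hL, h1, h2⟩ := find_window K p k' hp (by omega) hk
      rcases Nat.eq_zero_or_pos (r ⟨L, hL⟩) with hb0 | hbpos
      · have hkK : k' = K L := by
          have := hKsucc L hL
          omega
        calc ksum x k' ≤ C L + γ ⟨L, hL⟩ * ((k' : ℝ) - (K L : ℝ)) := hxup k' L hL h1 h2
          _ = C L := by rw [hkK]; ring
          _ ≤ ksum y (K L) := hbp L (le_of_lt hL)
          _ = ksum y k' := by rw [hkK]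
      · set b : ℕ := r ⟨L, hL⟩ with hbdef
        set a : ℕ := k' - K L with hadef
        have hab : a ≤ b := by
          have := hKsucc L hL
          omega
        have hch := chord (ksum y) (fun k => ksum_concave y hy0 k) (K L) a b hab
        have hKa : K L + a = k' := by omega
        have hKb : K L + b = K (L + 1) := (hKsucc L hL).symm
        rw [hKa, hKb] at hch
        have hxb : ksum x k' ≤ C L + γ ⟨L, hL⟩ * ((k' : ℝ) - (K L : ℝ)) := hxup k' L hL h1 h2
        have haR : ((k' : ℝ) - (K L : ℝ)) = (a : ℝ) := by
          rw [hadef]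
          rw [Nat.cast_sub h1]
        have hCL1 : C (L + 1) = C L + (b : ℝ) * γ ⟨L, hL⟩ := by
          rw [hCsucc L hL]
        have hbpL : C L ≤ ksum y (K L) := hbp L (by omega)
        have hbpL1 : C (L + 1) ≤ ksum y (K (L + 1)) := hbp (L + 1) (by omega)
        have hbposR : (0 : ℝ) < b := by exact_mod_cast hbpos
        have habR : (a : ℝ) ≤ b := by exact_mod_cast hab
        have ha0R : (0 : ℝ) ≤ a := Nat.cast_nonneg a
        have key : (b : ℝ) * ksum x k' ≤ (b : ℝ) * ksum y k' := by
          calc (b : ℝ) * ksum x k' ≤ (b : ℝ) * (C L + γ ⟨L, hL⟩ * (a : ℝ)) := by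
                apply mul_le_mul_of_nonneg_left _ (le_of_lt hbposR)
                rw [haR] at hxb
                exact hxb
            _ = ((b : ℝ) - a) * C L + (a : ℝ) * C (L + 1) := by
                rw [hCL1]
                ring
            _ ≤ ((b : ℝ) - a) * ksum y (K L) + (a : ℝ) * ksum y (K (L + 1)) :=
                add_le_add (mul_le_mul_of_nonneg_left hbpL (by linarith))
                  (mul_le_mul_of_nonneg_left hbpL1 ha0R)
            _ ≤ (b : ℝ) * ksum y k' := by nlinarith [hch]
        exact le_of_mul_le_mul_left key hbposR
    · have h1 : ksum x k' = ∑ jq, x jq := ksum_of_card_le x (by omega)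
      have h2 : ksum y k' = ∑ jq, y jq := ksum_of_card_le y (by omega)
      rw [h1, h2, hsumx, hsumy]
  · rw [hsumx, hsumy]
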